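/- The separability probability of the conditioned two-qubit state space is independent of the Bloch radius: for every a ∈ [0,1), μH^{12}(D^a_sep) · μH^{12}(D^0) = μH^{12}(D^0_sep) · μH^{12}(D^a). -/

import Mathlib

open MeasureTheory Matrix
open scoped Kronecker ComplexOrder

noncomputable instance matrixFrobenius (m n : Type*) [Fintype m] [Fintype n] :
    NormedAddCommGroup (Matrix m n ℂ) :=
  Matrix.frobeniusNormedAddCommGroup

noncomputable instance matrixMeasurableSpace (m n : Type*) [Fintype m] [Fintype n] :
    MeasurableSpace (Matrix m n ℂ) := borel _

instance matrixBorelSpace (m n : Type*) [Fintype m] [Fintype n] :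
    @BorelSpace (Matrix m n ℂ)
      (matrixFrobenius m n).toUniformSpace.toTopologicalSpace _ := ⟨rfl⟩

/-- Partial trace over the second factor of a two-qubit matrix. -/
noncomputable def ptrace2 (ρ : Matrix (Fin 2 × Fin 2) (Fin 2 × Fin 2) ℂ) :
    Matrix (Fin 2) (Fin 2) ℂ :=
  fun i j => ∑ k, ρ (i, k) (j, k)

/-- A density matrix: positive semidefinite of trace 1. -/
def IsDensity {n : Type*} [Fintype n] (ρ : Matrix n n ℂ) : Prop :=
  ρ.PosSemidef ∧ ρ.trace = 1

/-- Separability of a two-qubit density matrix. -/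
def SeparableState (ρ : Matrix (Fin 2 × Fin 2) (Fin 2 × Fin 2) ℂ) : Prop :=
  ∃ (K : ℕ) (_ : 1 ≤ K) (w : Fin K → ℝ)
    (σ τ : Fin K → Matrix (Fin 2) (Fin 2) ℂ),
    (∀ k, 0 ≤ w k) ∧ (∑ k, w k = 1) ∧
    (∀ k, IsDensity (σ k)) ∧ (∀ k, IsDensity (τ k)) ∧
    ρ = ∑ k, (w k : ℂ) • (σ k ⊗ₖ τ k)

/-- The Pauli matrix `σ₃ = diag(1, −1)`. -/
noncomputable def sigma3 : Matrix (Fin 2) (Fin 2) ℂ := !![1, 0; 0, -1]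

/-- `D^a`: two-qubit density matrices whose first marginal is
`(1/2)(I₂ + a σ₃)`. -/
def Dslice (a : ℝ) : Set (Matrix (Fin 2 × Fin 2) (Fin 2 × Fin 2) ℂ) :=
  {ρ | IsDensity ρ ∧
    ptrace2 ρ = (1 / 2 : ℂ) • ((1 : Matrix (Fin 2) (Fin 2) ℂ) + (a : ℂ) • sigma3)}

noncomputable instance matrixFrobeniusSpace (m n : Type*) [Fintype m] [Fintype n] :
    NormedSpace ℝ (Matrix m n ℂ) := Matrix.frobeniusNormedSpace

abbrev X2 := Matrix (Fin 2 × Fin 2) (Fin 2 × Fin 2) ℂ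
abbrev M2 := Matrix (Fin 2) (Fin 2) ℂ

lemma ptrace2_add (x y : X2) : ptrace2 (x + y) = ptrace2 x + ptrace2 y := by
  ext i j; simp [ptrace2, Finset.sum_add_distrib]

lemma ptrace2_sub (x y : X2) : ptrace2 (x - y) = ptrace2 x - ptrace2 y := by
  ext i j; simp [ptrace2, Finset.sum_sub_distrib]

lemma ptrace2_smul (r : ℝ) (x : X2) : ptrace2 (r • x) = r • ptrace2 x := by
  ext i j; simp [ptrace2, Finset.smul_sum]

lemma ptrace2_zero : ptrace2 0 = 0 := by
  ext i j; simp [ptrace2]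

lemma trace_ptrace2 (ρ : X2) : (ptrace2 ρ).trace = ρ.trace := by
  simp [ptrace2, Matrix.trace, Matrix.diag, Fintype.sum_prod_type]

lemma kron_conjTranspose (A B : M2) : (A ⊗ₖ B)ᴴ = Aᴴ ⊗ₖ Bᴴ := by
  ext p q
  simp [Matrix.conjTranspose_apply, Matrix.kroneckerMap_apply, star_mul']

lemma ptrace2_conj (M O : M2) (ρ : X2) :
    ptrace2 ((M ⊗ₖ (1 : M2)) * ρ * (O ⊗ₖ (1 : M2))) = M * ptrace2 ρ * O := by
  ext i j
  simp only [ptrace2, Matrix.mul_apply, Matrix.kroneckerMap_apply, Fintype.sum_prod_type,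
    Matrix.one_apply, Fin.sum_univ_two]
  fin_cases i <;> fin_cases j <;> simp <;> ring

lemma ptrace2_kron (σ τ : M2) : ptrace2 (σ ⊗ₖ τ) = τ.trace • σ := by
  ext i j
  simp [ptrace2, Matrix.trace, Matrix.diag, Finset.sum_mul, smul_eq_mul, Fin.sum_univ_two]
  ring

lemma psd_smul {n : Type*} [Fintype n] {M : Matrix n n ℂ} (hM : M.PosSemidef) {r : ℝ}
    (hr : 0 ≤ r) : ((r : ℂ) • M).PosSemidef := by
  rw [Matrix.posSemidef_iff_dotProduct_mulVec]
  constructor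
  · have h1 := hM.1
    rw [Matrix.IsHermitian, Matrix.conjTranspose_smul, h1]
    simp [Complex.star_def, Complex.conj_ofReal]
  · intro x
    have h := hM.dotProduct_mulVec_nonneg x
    rw [Matrix.smul_mulVec, dotProduct_smul, smul_eq_mul]
    exact mul_nonneg (by exact_mod_cast hr) h

lemma psd_trace_nonneg {n : Type*} [Fintype n] [DecidableEq n] {M : Matrix n n ℂ}
    (hM : M.PosSemidef) : 0 ≤ M.trace := by
  apply Finset.sum_nonneg
  intro i _
  have h := hM.dotProduct_mulVec_nonneg (Pi.single i 1)
  simpa [dotProduct, Matrix.mulVec, Pi.single_apply, Finset.sum_ite_eq,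
    Matrix.diag] using h

lemma psd_trace_eq_zero {n : Type*} [Fintype n] [DecidableEq n] {M : Matrix n n ℂ}
    (hM : M.PosSemidef) (h : M.trace = 0) : M = 0 := by
  exact (Matrix.PosSemidef.trace_eq_zero_iff hM).1 h

noncomputable def Nmat (a : ℝ) : M2 := !![(Real.sqrt (1+a) : ℂ), 0; 0, (Real.sqrt (1-a) : ℂ)]
noncomputable def Nmat' (a : ℝ) : M2 :=
  !![((Real.sqrt (1+a) : ℂ))⁻¹, 0; 0, ((Real.sqrt (1-a) : ℂ))⁻¹]

lemma Nmat_herm (a : ℝ) : (Nmat a)ᴴ = Nmat a := by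
  ext i j
  fin_cases i <;> fin_cases j <;>
    simp [Nmat, Matrix.conjTranspose_apply, Complex.star_def, Complex.conj_ofReal]

lemma Nmat'_herm (a : ℝ) : (Nmat' a)ᴴ = Nmat' a := by
  ext i j
  fin_cases i <;> fin_cases j <;>
    simp [Nmat', Matrix.conjTranspose_apply, Complex.star_def, ← Complex.ofReal_inv,
      Complex.conj_ofReal]

lemma sqrt1p_ne (a : ℝ) (ha0 : 0 ≤ a) : (Real.sqrt (1+a) : ℂ) ≠ 0 := by
  have : Real.sqrt (1+a) ≠ 0 := by
    positivity
  exact_mod_cast this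

lemma sqrt1m_ne (a : ℝ) (ha1 : a < 1) : (Real.sqrt (1-a) : ℂ) ≠ 0 := by
  have h : (0:ℝ) < 1 - a := by linarith
  have : Real.sqrt (1-a) ≠ 0 := by positivity
  exact_mod_cast this

lemma Nmat'_mul_Nmat (a : ℝ) (ha0 : 0 ≤ a) (ha1 : a < 1) : Nmat' a * Nmat a = 1 := by
  ext i j
  fin_cases i <;> fin_cases j <;>
    simp [Nmat, Nmat', Matrix.mul_apply, Fin.sum_univ_two, Matrix.one_apply,
      inv_mul_cancel₀ (sqrt1p_ne a ha0), inv_mul_cancel₀ (sqrt1m_ne a ha1)]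

lemma Nmat_mul_Nmat' (a : ℝ) (ha0 : 0 ≤ a) (ha1 : a < 1) : Nmat a * Nmat' a = 1 := by
  ext i j
  fin_cases i <;> fin_cases j <;>
    simp [Nmat, Nmat', Matrix.mul_apply, Fin.sum_univ_two, Matrix.one_apply,
      mul_inv_cancel₀ (sqrt1p_ne a ha0), mul_inv_cancel₀ (sqrt1m_ne a ha1)]

lemma Nmat_sq (a : ℝ) (ha0 : 0 ≤ a) (ha1 : a < 1) :
    Nmat a * Nmat a = 1 + (a : ℂ) • sigma3 := by
  have h1 : (Real.sqrt (1+a) : ℂ) * (Real.sqrt (1+a) : ℂ) = ((1:ℂ) + a) := by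
    rw [← Complex.ofReal_mul, Real.mul_self_sqrt (by linarith)]
    push_cast; ring
  have h2 : (Real.sqrt (1-a) : ℂ) * (Real.sqrt (1-a) : ℂ) = ((1:ℂ) - a) := by
    rw [← Complex.ofReal_mul, Real.mul_self_sqrt (by linarith)]
    push_cast; ring
  ext i j
  fin_cases i <;> fin_cases j <;>
    simp [Nmat, sigma3, Matrix.mul_apply, Fin.sum_univ_two, Matrix.one_apply, h1, h2] <;> ring

lemma trace_sigma3 : (sigma3).trace = 0 := by
  simp [sigma3, Matrix.trace, Matrix.diag, Fin.sum_univ_two]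

noncomputable def Tconj (M : M2) (ρ : X2) : X2 :=
  (M ⊗ₖ (1 : M2)) * ρ * (M ⊗ₖ (1 : M2))

lemma kron_one_mul_kron_one (M O : M2) :
    (M ⊗ₖ (1 : M2)) * (O ⊗ₖ (1 : M2)) = (M * O) ⊗ₖ (1 : M2) := by
  rw [← Matrix.mul_kronecker_mul, Matrix.one_mul]

lemma Tconj_kron (M : M2) (σ τ : M2) :
    Tconj M (σ ⊗ₖ τ) = (M * σ * M) ⊗ₖ τ := by
  rw [Tconj]
  calc (M ⊗ₖ (1:M2)) * (σ ⊗ₖ τ) * (M ⊗ₖ (1:M2))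
      = ((M * σ) ⊗ₖ ((1:M2) * τ)) * (M ⊗ₖ (1:M2)) := by rw [← Matrix.mul_kronecker_mul]
    _ = (M * σ * M) ⊗ₖ ((1:M2) * τ * (1:M2)) := by rw [← Matrix.mul_kronecker_mul]
    _ = (M * σ * M) ⊗ₖ τ := by rw [Matrix.one_mul, Matrix.mul_one]

lemma Tconj_psd {M : M2} (hH : Mᴴ = M) {ρ : X2} (hρ : ρ.PosSemidef) :
    (Tconj M ρ).PosSemidef := by
  have h := hρ.mul_mul_conjTranspose_same (M ⊗ₖ (1 : M2))
  rwa [kron_conjTranspose, hH, Matrix.conjTranspose_one] at h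

/-- Separability is preserved under `Tconj` by an invertible Hermitian `M`,
provided the result still has trace one. -/
lemma sep_Tconj {M M' : M2} (hH : Mᴴ = M) (h1 : M' * M = 1) (h2 : M * M' = 1)
    {ρ : X2} (hsep : SeparableState ρ) (htr : (Tconj M ρ).trace = 1) :
    SeparableState (Tconj M ρ) := by
  obtain ⟨K, hK, w, σ, τ, hw0, hw1, hσ, hτ, hρ⟩ := hsep
  have hP : ∀ k, (M * σ k * M).PosSemidef := by
    intro k
    have := (hσ k).1.mul_mul_conjTranspose_same M
    rwa [hH] at this
  have htrP : ∀ k, 0 ≤ (M * σ k * M).trace := fun k => psd_trace_nonneg (hP k)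
  set r : Fin K → ℝ := fun k => ((M * σ k * M).trace).re with hr
  have htr_eq : ∀ k, (M * σ k * M).trace = ((r k : ℝ) : ℂ) := by
    intro k
    have h := htrP k
    rw [Complex.le_def] at h
    exact Complex.ext rfl (by simpa using h.2.symm)
  have hr0 : ∀ k, 0 ≤ r k := by
    intro k
    have h := htrP k
    rw [Complex.le_def] at h
    simpa using h.1
  have hrne : ∀ k, r k ≠ 0 := by
    intro k h0
    have hz : (M * σ k * M).trace = 0 := by rw [htr_eq k, h0]; simp
    have hP0 : M * σ k * M = 0 := psd_trace_eq_zero (hP k) hz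
    have hσ0 : σ k = 0 := by
      have : M' * (M * σ k * M) * M' = σ k := by
        rw [← Matrix.mul_assoc, ← Matrix.mul_assoc, h1, Matrix.one_mul,
          Matrix.mul_assoc, h2, Matrix.mul_one]
      rw [hP0] at this
      simpa using this.symm
    have := (hσ k).2
    rw [hσ0] at this
    simp at this
  have hrpos : ∀ k, 0 < r k := fun k => lt_of_le_of_ne (hr0 k) (Ne.symm (hrne k))
  -- expansion of the conjugated state
  have hexp : Tconj M ρ = ∑ k, (w k : ℂ) • ((M * σ k * M) ⊗ₖ τ k) := by
    rw [Tconj, hρ, Finset.mul_sum, Finset.sum_mul]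
    apply Finset.sum_congr rfl
    intro k _
    rw [Matrix.mul_smul, Matrix.smul_mul, ← Tconj, Tconj_kron]
  -- trace identity
  have htr2 : (Tconj M ρ).trace = ((∑ k, w k * r k : ℝ) : ℂ) := by
    rw [hexp, Matrix.trace_sum]
    push_cast
    apply Finset.sum_congr rfl
    intro k _
    rw [Matrix.trace_smul, Matrix.trace_kronecker, htr_eq k, (hτ k).2]
    simp
  have hsum : ∑ k, w k * r k = 1 := by
    rw [htr] at htr2
    exact_mod_cast htr2.symm
  have hrc : ∀ k, ((r k : ℝ) : ℂ) ≠ 0 := fun k => by exact_mod_cast hrne k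
  refine ⟨K, hK, fun k => w k * r k, fun k => ((((r k)⁻¹ : ℝ)) : ℂ) • (M * σ k * M), τ,
    fun k => mul_nonneg (hw0 k) (hr0 k), hsum, ?_, hτ, ?_⟩
  · intro k
    dsimp only
    constructor
    · exact psd_smul (hP k) (inv_nonneg.mpr (hr0 k))
    · rw [Matrix.trace_smul, htr_eq k, smul_eq_mul]
      push_cast
      rw [inv_mul_cancel₀ (hrc k)]
  · rw [hexp]
    apply Finset.sum_congr rfl
    intro k _
    rw [Matrix.smul_kronecker, smul_smul]
    congr 1
    push_cast
    rw [mul_assoc, mul_inv_cancel₀ (hrc k), mul_one]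

section slices
variable {a : ℝ} (ha0 : 0 ≤ a) (ha1 : a < 1)

lemma marg_trace (b : ℝ) :
    ((1 / 2 : ℂ) • ((1 : M2) + (b : ℂ) • sigma3)).trace = 1 := by
  rw [Matrix.trace_smul, Matrix.trace_add, Matrix.trace_smul, trace_sigma3, Matrix.trace_one]
  simp

/-- membership transfer in both directions, for an arbitrary pair of Hermitian conjugators -/
lemma Tconj_marg {M : M2} (hH : Mᴴ = M) {ρ : X2} {P Q : M2}
    (hρp : ρ.PosSemidef) (hρm : ptrace2 ρ = P) (hPQ : M * P * M = Q) (hQt : Q.trace = 1) :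
    (Tconj M ρ).PosSemidef ∧ ptrace2 (Tconj M ρ) = Q ∧ (Tconj M ρ).trace = 1 := by
  have hmarg : ptrace2 (Tconj M ρ) = Q := by
    rw [Tconj, ptrace2_conj, hρm, hPQ]
  exact ⟨Tconj_psd hH hρp, hmarg, by rw [← trace_ptrace2, hmarg, hQt]⟩

lemma NPN (ha0 : 0 ≤ a) (ha1 : a < 1) :
    Nmat a * ((1 / 2 : ℂ) • ((1 : M2) + (((0:ℝ)) : ℂ) • sigma3)) * Nmat a
      = (1 / 2 : ℂ) • ((1 : M2) + (a : ℂ) • sigma3) := by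
  rw [show (((0:ℝ)) : ℂ) • sigma3 = 0 by simp, add_zero, Matrix.mul_smul, Matrix.smul_mul,
    Matrix.mul_one, Nmat_sq a ha0 ha1]

lemma N'QN' (ha0 : 0 ≤ a) (ha1 : a < 1) :
    Nmat' a * ((1 / 2 : ℂ) • ((1 : M2) + (a : ℂ) • sigma3)) * Nmat' a
      = (1 / 2 : ℂ) • ((1 : M2) + ((0:ℝ) : ℂ) • sigma3) := by
  rw [← Nmat_sq a ha0 ha1, Matrix.mul_smul, Matrix.smul_mul]
  rw [show Nmat' a * (Nmat a * Nmat a) * Nmat' a = (Nmat' a * Nmat a) * (Nmat a * Nmat' a) by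
    rw [Matrix.mul_assoc, Matrix.mul_assoc, Matrix.mul_assoc]]
  rw [Nmat'_mul_Nmat a ha0 ha1, Nmat_mul_Nmat' a ha0 ha1, Matrix.one_mul]
  simp

lemma T_mem (ha0 : 0 ≤ a) (ha1 : a < 1) {ρ : X2} (hρ : ρ ∈ Dslice 0) :
    Tconj (Nmat a) ρ ∈ Dslice a := by
  obtain ⟨⟨hpsd, -⟩, hm⟩ := hρ
  have h := Tconj_marg (Nmat_herm a) hpsd hm (NPN ha0 ha1) (marg_trace a)
  exact ⟨⟨h.1, h.2.2⟩, h.2.1⟩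

lemma T'_mem (ha0 : 0 ≤ a) (ha1 : a < 1) {ρ : X2} (hρ : ρ ∈ Dslice a) :
    Tconj (Nmat' a) ρ ∈ Dslice 0 := by
  obtain ⟨⟨hpsd, -⟩, hm⟩ := hρ
  have h := Tconj_marg (Nmat'_herm a) hpsd hm (N'QN' ha0 ha1) (marg_trace 0)
  exact ⟨⟨h.1, h.2.2⟩, h.2.1⟩

lemma TT' (ha0 : 0 ≤ a) (ha1 : a < 1) (ρ : X2) :
    Tconj (Nmat a) (Tconj (Nmat' a) ρ) = ρ := by
  rw [Tconj, Tconj]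
  rw [show ∀ A B C : X2, ∀ (ρ : X2), A * (B * ρ * B) * C = (A * B) * ρ * (B * C) from
    fun A B C ρ => by simp only [Matrix.mul_assoc], ]
  rw [kron_one_mul_kron_one, kron_one_mul_kron_one, Nmat_mul_Nmat' a ha0 ha1,
    Nmat'_mul_Nmat a ha0 ha1]
  simp [Matrix.one_kronecker_one]

lemma T'T (ha0 : 0 ≤ a) (ha1 : a < 1) (ρ : X2) :
    Tconj (Nmat' a) (Tconj (Nmat a) ρ) = ρ := by
  rw [Tconj, Tconj]
  rw [show ∀ A B C : X2, ∀ (ρ : X2), A * (B * ρ * B) * C = (A * B) * ρ * (B * C) from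
    fun A B C ρ => by simp only [Matrix.mul_assoc], ]
  rw [kron_one_mul_kron_one, kron_one_mul_kron_one, Nmat_mul_Nmat' a ha0 ha1,
    Nmat'_mul_Nmat a ha0 ha1]
  simp [Matrix.one_kronecker_one]

lemma img_slice (ha0 : 0 ≤ a) (ha1 : a < 1) : Tconj (Nmat a) '' (Dslice 0) = Dslice a := by
  apply Set.Subset.antisymm
  · rintro - ⟨ρ, hρ, rfl⟩
    exact T_mem ha0 ha1 hρ
  · intro ρ hρ
    exact ⟨Tconj (Nmat' a) ρ, T'_mem ha0 ha1 hρ, TT' ha0 ha1 ρ⟩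

lemma img_slice_sep (ha0 : 0 ≤ a) (ha1 : a < 1) :
    Tconj (Nmat a) '' {ρ ∈ Dslice 0 | SeparableState ρ} = {ρ ∈ Dslice a | SeparableState ρ} := by
  apply Set.Subset.antisymm
  · rintro - ⟨ρ, ⟨hρ, hsep⟩, rfl⟩
    have hmem := T_mem ha0 ha1 hρ
    refine ⟨hmem, ?_⟩
    exact sep_Tconj (Nmat_herm a) (Nmat'_mul_Nmat a ha0 ha1) (Nmat_mul_Nmat' a ha0 ha1)
      hsep hmem.1.2
  · rintro ρ ⟨hρ, hsep⟩
    have hmem := T'_mem ha0 ha1 hρ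
    refine ⟨Tconj (Nmat' a) ρ, ⟨hmem, ?_⟩, TT' ha0 ha1 ρ⟩
    exact sep_Tconj (Nmat'_herm a) (Nmat_mul_Nmat' a ha0 ha1) (Nmat'_mul_Nmat a ha0 ha1)
      hsep hmem.1.2
end slices

abbrev R12 : Type := ℝ × ℝ × ℝ × ℝ × ℝ × ℝ × ℝ × ℝ × ℝ × ℝ × ℝ × ℝ

/-- The submodule of Hermitian matrices with vanishing partial trace. -/
noncomputable def Wsub : Submodule ℝ X2 where
  carrier := {w | wᴴ = w ∧ ptrace2 w = 0}
  add_mem' := by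
    rintro x y ⟨hx1, hx2⟩ ⟨hy1, hy2⟩
    exact ⟨by rw [Matrix.conjTranspose_add, hx1, hy1],
      by rw [ptrace2_add, hx2, hy2, add_zero]⟩
  zero_mem' := ⟨Matrix.conjTranspose_zero, ptrace2_zero⟩
  smul_mem' := by
    rintro r x ⟨h1, h2⟩
    refine ⟨?_, by rw [ptrace2_smul, h2, smul_zero]⟩
    rw [Matrix.conjTranspose_smul, star_trivial, h1]

lemma Wsub_mem (w : X2) : w ∈ Wsub ↔ wᴴ = w ∧ ptrace2 w = 0 := Iff.rfl

noncomputable def flinfun (v : X2) : R12 :=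
  ((v (0,0) (0,0)).re, (v (0,0) (0,1)).re, (v (0,0) (0,1)).im,
   (v (1,0) (1,0)).re, (v (1,0) (1,1)).re, (v (1,0) (1,1)).im,
   (v (0,0) (1,0)).re, (v (0,0) (1,0)).im,
   (v (0,0) (1,1)).re, (v (0,0) (1,1)).im,
   (v (0,1) (1,0)).re, (v (0,1) (1,0)).im)

noncomputable def gfun (c : R12) : Fin 2 → Fin 2 → Fin 2 → Fin 2 → ℂ :=
  ![ ![ ![ ![⟨c.1, 0⟩, ⟨c.2.1, c.2.2.1⟩],
         ![⟨c.2.2.2.2.2.2.1, c.2.2.2.2.2.2.2.1⟩, ⟨c.2.2.2.2.2.2.2.2.1, c.2.2.2.2.2.2.2.2.2.1⟩] ],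
       ![ ![⟨c.2.1, -c.2.2.1⟩, ⟨-c.1, 0⟩],
         ![⟨c.2.2.2.2.2.2.2.2.2.2.1, c.2.2.2.2.2.2.2.2.2.2.2⟩,
           ⟨-c.2.2.2.2.2.2.1, -c.2.2.2.2.2.2.2.1⟩] ] ],
     ![ ![ ![⟨c.2.2.2.2.2.2.1, -c.2.2.2.2.2.2.2.1⟩,
           ⟨c.2.2.2.2.2.2.2.2.2.2.1, -c.2.2.2.2.2.2.2.2.2.2.2⟩],
         ![⟨c.2.2.2.1, 0⟩, ⟨c.2.2.2.2.1, c.2.2.2.2.2.1⟩] ],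
       ![ ![⟨c.2.2.2.2.2.2.2.2.1, -c.2.2.2.2.2.2.2.2.2.1⟩,
           ⟨-c.2.2.2.2.2.2.1, c.2.2.2.2.2.2.2.1⟩],
         ![⟨c.2.2.2.2.1, -c.2.2.2.2.2.1⟩, ⟨-c.2.2.2.1, 0⟩] ] ] ]

noncomputable def gmat (c : R12) : X2 := fun p q => gfun c p.1 p.2 q.1 q.2

lemma gmat_mem (c : R12) : gmat c ∈ Wsub := by
  constructor
  · ext ⟨i, k⟩ ⟨j, l⟩
    fin_cases i <;> fin_cases k <;> fin_cases j <;> fin_cases l <;>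
      simp [gmat, gfun, Matrix.conjTranspose_apply, Complex.ext_iff]
  · ext i j
    fin_cases i <;> fin_cases j <;>
      simp [ptrace2, gmat, gfun, Fin.sum_univ_two, Complex.ext_iff]

lemma hermitian_entries {w : X2} (hH : wᴴ = w) :
    (∀ p q, (w q p).re = (w p q).re) ∧ (∀ p q, (w q p).im = -(w p q).im) := by
  constructor <;> intro p q <;>
  · have h := congrFun (congrFun hH p) q
    rw [Matrix.conjTranspose_apply] at h
    rw [← h]
    simp [Complex.star_def]

lemma ptrace_entries {w : X2} (hp : ptrace2 w = 0) (i j : Fin 2) :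
    ((w (i,0) (j,0)).re + (w (i,1) (j,1)).re = 0) ∧
    ((w (i,0) (j,0)).im + (w (i,1) (j,1)).im = 0) := by
  have h := congrFun (congrFun hp i) j
  rw [show ptrace2 w i j = w (i,0) (j,0) + w (i,1) (j,1) by
    simp [ptrace2, Fin.sum_univ_two]] at h
  constructor
  · simpa using congrArg Complex.re h
  · simpa using congrArg Complex.im h

set_option maxHeartbeats 2000000 in
lemma gmat_flinfun {w : X2} (hw : w ∈ Wsub) : gmat (flinfun w) = w := by
  obtain ⟨hH, hp⟩ := hw
  obtain ⟨hre, him⟩ := hermitian_entries hH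
  have hpre00 : (w 0 0).re + (w (0,1) (0,1)).re = 0 := (ptrace_entries hp 0 0).1
  have hpre01 : (w 0 (1,0)).re + (w (0,1) 1).re = 0 := (ptrace_entries hp 0 1).1
  have hpre10 : (w (1,0) 0).re + (w 1 (0,1)).re = 0 := (ptrace_entries hp 1 0).1
  have hpre11 : (w (1,0) (1,0)).re + (w 1 1).re = 0 := (ptrace_entries hp 1 1).1
  have hpim00 : (w 0 0).im + (w (0,1) (0,1)).im = 0 := (ptrace_entries hp 0 0).2
  have hpim01 : (w 0 (1,0)).im + (w (0,1) 1).im = 0 := (ptrace_entries hp 0 1).2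
  have hpim10 : (w (1,0) 0).im + (w 1 (0,1)).im = 0 := (ptrace_entries hp 1 0).2
  have hpim11 : (w (1,0) (1,0)).im + (w 1 1).im = 0 := (ptrace_entries hp 1 1).2
  ext ⟨i, k⟩ ⟨j, l⟩
  fin_cases i <;> fin_cases k <;> fin_cases j <;> fin_cases l <;>
    (apply Complex.ext <;>
      simp [gmat, gfun, flinfun, Prod.mk_zero_zero, Prod.mk_one_one] <;>
      linarith [hre 0 0,
        him 0 0,
        hre 0 (0,1),
        him 0 (0,1),
        hre 0 (1,0),
        him 0 (1,0),
        hre 0 1,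
        him 0 1,
        hre (0,1) 0,
        him (0,1) 0,
        hre (0,1) (0,1),
        him (0,1) (0,1),
        hre (0,1) (1,0),
        him (0,1) (1,0),
        hre (0,1) 1,
        him (0,1) 1,
        hre (1,0) 0,
        him (1,0) 0,
        hre (1,0) (0,1),
        him (1,0) (0,1),
        hre (1,0) (1,0),
        him (1,0) (1,0),
        hre (1,0) 1,
        him (1,0) 1,
        hre 1 0,
        him 1 0,
        hre 1 (0,1),
        him 1 (0,1),
        hre 1 (1,0),
        him 1 (1,0),
        hre 1 1,
        him 1 1,
        hpre00, hpre01, hpre10, hpre11,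
        hpim00, hpim01, hpim10, hpim11])

lemma flinfun_gmat (c : R12) : flinfun (gmat c) = c := rfl

set_option maxHeartbeats 1000000 in
noncomputable def flinX : X2 →ₗ[ℝ] R12 where
  toFun := flinfun
  map_add' v v' := by
    simp [flinfun, Prod.ext_iff, Matrix.add_apply]
  map_smul' r v := by
    simp [flinfun, Prod.ext_iff, Matrix.smul_apply, Complex.smul_re, Complex.smul_im,
      Prod.smul_def, smul_eq_mul]

set_option maxHeartbeats 2000000 in
noncomputable def glinX : R12 →ₗ[ℝ] X2 where
  toFun := gmat
  map_add' c c' := by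
    ext ⟨i, k⟩ ⟨j, l⟩
    fin_cases i <;> fin_cases k <;> fin_cases j <;> fin_cases l <;>
      (apply Complex.ext <;> simp [gmat, gfun, Matrix.add_apply] <;> ring)
  map_smul' r c := by
    ext ⟨i, k⟩ ⟨j, l⟩
    fin_cases i <;> fin_cases k <;> fin_cases j <;> fin_cases l <;>
      (apply Complex.ext <;>
        simp [gmat, gfun, Matrix.smul_apply, Complex.smul_re, Complex.smul_im,
          Prod.smul_def, smul_eq_mul] <;> ring)

noncomputable def WEquiv : Wsub ≃ₗ[ℝ] R12 :=
  LinearEquiv.ofLinear (flinX.comp Wsub.subtype) (glinX.codRestrict Wsub gmat_mem)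
    (LinearMap.ext fun c => flinfun_gmat c)
    (LinearMap.ext fun w => Subtype.ext (gmat_flinfun w.2))

lemma finrank_Wsub : Module.finrank ℝ Wsub = 12 := by
  rw [WEquiv.finrank_eq]
  simp [Module.finrank_prod]

noncomputable def Tlin (a : ℝ) : X2 →ₗ[ℝ] X2 where
  toFun ρ := Tconj (Nmat a) ρ
  map_add' x y := by simp [Tconj, Matrix.mul_add, Matrix.add_mul]
  map_smul' r x := by simp [Tconj, Matrix.mul_smul, Matrix.smul_mul]

lemma Tlin_memW (a : ℝ) : ∀ w ∈ Wsub, Tlin a w ∈ Wsub := by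
  intro w hw
  rw [Wsub_mem] at hw ⊢
  obtain ⟨h1, h2⟩ := hw
  constructor
  · show ((Nmat a ⊗ₖ (1:M2)) * w * (Nmat a ⊗ₖ (1:M2)))ᴴ = _
    rw [Matrix.conjTranspose_mul, Matrix.conjTranspose_mul, kron_conjTranspose,
      Nmat_herm, Matrix.conjTranspose_one, h1, ← Matrix.mul_assoc]
    rfl
  · show ptrace2 ((Nmat a ⊗ₖ (1:M2)) * w * (Nmat a ⊗ₖ (1:M2))) = 0
    rw [ptrace2_conj, h2, Matrix.mul_zero, Matrix.zero_mul]

noncomputable def Lres (a : ℝ) : Wsub →ₗ[ℝ] Wsub := (Tlin a).restrict (Tlin_memW a)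

noncomputable def rhoc (a : ℝ) : X2 :=
  ((1 / 2 : ℂ) • ((1 : M2) + (a : ℂ) • sigma3)) ⊗ₖ ((1 / 2 : ℂ) • (1 : M2))

lemma ptrace2_rhoc (a : ℝ) :
    ptrace2 (rhoc a) = (1 / 2 : ℂ) • ((1 : M2) + (a : ℂ) • sigma3) := by
  rw [rhoc, ptrace2_kron, Matrix.trace_smul, Matrix.trace_one]
  norm_num

lemma sigma3_herm : (sigma3)ᴴ = sigma3 := by
  ext i j
  fin_cases i <;> fin_cases j <;> simp [sigma3, Matrix.conjTranspose_apply]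

lemma rhoc_herm (a : ℝ) : (rhoc a)ᴴ = rhoc a := by
  rw [rhoc, kron_conjTranspose, Matrix.conjTranspose_smul, Matrix.conjTranspose_smul,
    Matrix.conjTranspose_add, Matrix.conjTranspose_smul, Matrix.conjTranspose_one,
    sigma3_herm]
  congr 1 <;> simp [Complex.star_def, Complex.conj_ofReal]

lemma Tlin_rhoc {a : ℝ} (ha0 : 0 ≤ a) (ha1 : a < 1) : Tlin a (rhoc 0) = rhoc a := by
  show Tconj (Nmat a) (rhoc 0) = rhoc a
  rw [rhoc, Tconj_kron]
  rw [show ((0:ℝ) : ℂ) = (((0:ℝ)) : ℂ) from rfl, NPN ha0 ha1]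
  rfl

set_option maxHeartbeats 1000000 in
lemma meas_scale {a : ℝ} (ha0 : 0 ≤ a) (ha1 : a < 1) (S : Set X2)
    (hS : ∀ ρ ∈ S, ρ - rhoc 0 ∈ Wsub) :
    μH[(12:ℝ)] (Tconj (Nmat a) '' S)
      = ENNReal.ofReal |LinearMap.det (Lres a)| * μH[(12:ℝ)] S := by
  letI : MeasurableSpace Wsub := borel _
  haveI : @BorelSpace Wsub
      (inferInstance : MetricSpace Wsub).toUniformSpace.toTopologicalSpace _ := ⟨rfl⟩
  have hisoa : ∀ v : X2, Isometry (fun w : Wsub => v + (w : X2)) := by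
    intro v
    apply Isometry.of_dist_eq
    intro x y
    rw [dist_add_left]
    rfl
  set A : Set Wsub := (fun w : Wsub => rhoc 0 + (w : X2)) ⁻¹' S with hA
  have hrange : S ⊆ Set.range (fun w : Wsub => rhoc 0 + (w : X2)) := by
    intro ρ hρ
    exact ⟨⟨ρ - rhoc 0, hS ρ hρ⟩, by simp⟩
  have hSA : (fun w : Wsub => rhoc 0 + (w : X2)) '' A = S :=
    Set.image_preimage_eq_of_subset hrange
  have hcomm : ∀ w : Wsub, Tconj (Nmat a) (rhoc 0 + (w : X2))
      = rhoc a + ((Lres a w : Wsub) : X2) := by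
    intro w
    show Tlin a (rhoc 0 + (w : X2)) = _
    rw [map_add, Tlin_rhoc ha0 ha1]
    rfl
  have hTS : Tconj (Nmat a) '' S = (fun w : Wsub => rhoc a + (w : X2)) '' (Lres a '' A) := by
    rw [← hSA, ← Set.image_comp, ← Set.image_comp]
    exact Set.image_congr fun w _ => hcomm w
  have m1 : ∀ (v : X2) (B : Set Wsub),
      μH[(12:ℝ)] ((fun w : Wsub => v + (w : X2)) '' B) = μH[(12:ℝ)] B := by
    intro v B
    exact (hisoa v).hausdorffMeasure_image (Or.inl (by norm_num)) B
  rw [hTS, m1, ← hSA, m1]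
  have h12 : μH[(12:ℝ)] (Lres a '' A) = μH[((Module.finrank ℝ Wsub : ℕ) : ℝ)] (Lres a '' A)
      := by rw [finrank_Wsub]; norm_num
  have h12' : μH[(12:ℝ)] A = μH[((Module.finrank ℝ Wsub : ℕ) : ℝ)] A := by
    rw [finrank_Wsub]; norm_num
  rw [h12, h12']
  exact Measure.addHaar_image_linearMap _ (Lres a) A


theorem sep_probability_independent_of_bloch_radius (a : ℝ) (ha0 : 0 ≤ a) (ha1 : a < 1) :
    μH[(12 : ℝ)] {ρ ∈ Dslice a | SeparableState ρ} * μH[(12 : ℝ)] (Dslice 0)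
      = μH[(12 : ℝ)] {ρ ∈ Dslice 0 | SeparableState ρ} * μH[(12 : ℝ)] (Dslice a) := by
  have hDsub : ∀ b : ℝ, ∀ ρ ∈ Dslice b, ρ - rhoc b ∈ Wsub := by
    intro b ρ hρ
    rw [Wsub_mem]
    constructor
    · rw [Matrix.conjTranspose_sub, rhoc_herm b, hρ.1.1.1]
    · rw [ptrace2_sub, hρ.2, ptrace2_rhoc, sub_self]
  have h1 : μH[(12:ℝ)] (Dslice a)
      = ENNReal.ofReal |LinearMap.det (Lres a)| * μH[(12:ℝ)] (Dslice 0) := by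
    rw [← img_slice ha0 ha1]
    exact meas_scale ha0 ha1 _ (hDsub 0)
  have h2 : μH[(12:ℝ)] {ρ ∈ Dslice a | SeparableState ρ}
      = ENNReal.ofReal |LinearMap.det (Lres a)|
          * μH[(12:ℝ)] {ρ ∈ Dslice 0 | SeparableState ρ} := by
    rw [← img_slice_sep ha0 ha1]
    exact meas_scale ha0 ha1 _ (fun ρ hρ => hDsub 0 ρ hρ.1)
  rw [h1, h2]
  ring
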